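/- Let u be the uniform distribution over the C(n,2) unordered qubit pairs and let p be a distribution on pairs with pointwise domination p(e) ≤ e^α u(e) for all e. For a Pauli string of weight w, the backflow probability under p-sampled uniform two-qubit Pauli gates satisfies p_bf(w) ≤ e^α·C(w,2) / (9·C(n,2) − 4e^α·w(3n − 2w − 1)), provided the denominator is positive. -/
import Mathlib


open scoped Classical

open Finset

lemma decay_card9 : ∀ q1 q2 : Fin 4,
    ((univ : Finset (Fin 3 × Fin 3)).filter fun ab =>
      Fin.succ ab.1 = q1 ∧ Fin.succ ab.2 = q2).card ≤ if q1 ≠ 0 ∧ q2 ≠ 0 then 1 else 0 := by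
  decide


lemma anti_card9 : ∀ q1 q2 : Fin 4,
    ((univ : Finset (Fin 3 × Fin 3)).filter fun ab =>
      ¬ Even ((if q1 ≠ 0 ∧ q1 ≠ Fin.succ ab.1 then 1 else 0) +
              (if q2 ≠ 0 ∧ q2 ≠ Fin.succ ab.2 then 1 else 0))).card
      ≤ if ¬ (q1 = 0 ∧ q2 = 0) then 6 else 0 := by
  decide


lemma sum9_decay (q1 q2 : Fin 4) (c c' : ℝ) (hc : 0 ≤ c) (hcc : c ≤ c') (hc' : 0 ≤ c') :
    ∑ ab : Fin 3 × Fin 3, (if Fin.succ ab.1 = q1 ∧ Fin.succ ab.2 = q2 then c else 0)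
      ≤ (if q1 ≠ 0 ∧ q2 ≠ 0 then (1:ℝ) else 0) * c' := by
  rw [← Finset.sum_filter, Finset.sum_const, nsmul_eq_mul]
  have h1 : ((Finset.univ.filter fun ab : Fin 3 × Fin 3 =>
      Fin.succ ab.1 = q1 ∧ Fin.succ ab.2 = q2).card : ℝ)
      ≤ (if q1 ≠ 0 ∧ q2 ≠ 0 then (1:ℝ) else 0) := by
    have := decay_card9 q1 q2
    calc ((Finset.univ.filter fun ab : Fin 3 × Fin 3 =>
        Fin.succ ab.1 = q1 ∧ Fin.succ ab.2 = q2).card : ℝ)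
        ≤ ((if q1 ≠ 0 ∧ q2 ≠ 0 then 1 else 0 : ℕ) : ℝ) := by exact_mod_cast this
      _ = (if q1 ≠ 0 ∧ q2 ≠ 0 then (1:ℝ) else 0) := by split_ifs <;> norm_num
  exact mul_le_mul h1 hcc hc (by positivity)


lemma sum9_anti (q1 q2 : Fin 4) (c c' : ℝ) (hc : 0 ≤ c) (hcc : c ≤ c') (hc' : 0 ≤ c') :
    ∑ ab : Fin 3 × Fin 3,
      (if ¬ Even ((if q1 ≠ 0 ∧ q1 ≠ Fin.succ ab.1 then 1 else 0) +
              (if q2 ≠ 0 ∧ q2 ≠ Fin.succ ab.2 then 1 else 0)) then c else 0)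
      ≤ (if ¬ (q1 = 0 ∧ q2 = 0) then (6:ℝ) else 0) * c' := by
  rw [← Finset.sum_filter, Finset.sum_const, nsmul_eq_mul]
  have h1 : (((Finset.univ : Finset (Fin 3 × Fin 3)).filter fun ab =>
      ¬ Even ((if q1 ≠ 0 ∧ q1 ≠ Fin.succ ab.1 then 1 else 0) +
              (if q2 ≠ 0 ∧ q2 ≠ Fin.succ ab.2 then 1 else 0))).card : ℝ)
      ≤ (if ¬ (q1 = 0 ∧ q2 = 0) then (6:ℝ) else 0) := by
    have := anti_card9 q1 q2
    calc (((Finset.univ : Finset (Fin 3 × Fin 3)).filter fun ab =>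
        ¬ Even ((if q1 ≠ 0 ∧ q1 ≠ Fin.succ ab.1 then 1 else 0) +
                (if q2 ≠ 0 ∧ q2 ≠ Fin.succ ab.2 then 1 else 0))).card : ℝ)
        ≤ ((if ¬ (q1 = 0 ∧ q2 = 0) then 6 else 0 : ℕ) : ℝ) := by exact_mod_cast this
      _ = (if ¬ (q1 = 0 ∧ q2 = 0) then (6:ℝ) else 0) := by split_ifs <;> norm_num
  exact mul_le_mul h1 hcc hc (by positivity)


lemma subcard' {n : ℕ} (P : Fin n × Fin n → Prop)
    [inst1 : DecidablePred fun e : {p : Fin n × Fin n // p.1 < p.2} => P e.1]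
    [inst2 : DecidablePred fun p : Fin n × Fin n => p.1 < p.2 ∧ P p] :
    (univ.filter fun e : {p : Fin n × Fin n // p.1 < p.2} => P e.1).card
      = (univ.filter fun p : Fin n × Fin n => p.1 < p.2 ∧ P p).card := by
  apply Finset.card_bij (fun e _ => e.1)
  · rintro ⟨p, hp⟩ he
    simp only [mem_filter, mem_univ, true_and] at he ⊢
    exact ⟨hp, he⟩
  · rintro ⟨p, hp⟩ _ ⟨q, hq⟩ _ h
    exact Subtype.ext h
  · rintro p hp
    simp only [mem_filter, mem_univ, true_and] at hp
    exact ⟨⟨p, hp.1⟩, by simp [hp.2], rfl⟩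


lemma double_count {n : ℕ} (P : Fin n × Fin n → Prop)
    [inst1 : DecidablePred fun e : {p : Fin n × Fin n // p.1 < p.2} => P e.1]
    [inst3 : DecidablePred fun p : Fin n × Fin n => p.1 ≠ p.2 ∧ P p]
    (hsymm : ∀ a b, P (a, b) → P (b, a)) :
    2 * (univ.filter fun e : {p : Fin n × Fin n // p.1 < p.2} => P e.1).card
      = (univ.filter fun p : Fin n × Fin n => p.1 ≠ p.2 ∧ P p).card := by
  classical
  rw [subcard' P]
  have hsplit : (univ.filter fun p : Fin n × Fin n => p.1 ≠ p.2 ∧ P p)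
      = (univ.filter fun p : Fin n × Fin n => p.1 < p.2 ∧ P p)
        ∪ (univ.filter fun p : Fin n × Fin n => p.2 < p.1 ∧ P p) := by
    ext p
    simp only [mem_filter, mem_union, mem_univ, true_and]
    constructor
    · rintro ⟨hne, hP⟩
      rcases lt_or_gt_of_ne hne with h | h
      · exact Or.inl ⟨h, hP⟩
      · exact Or.inr ⟨h, hP⟩
    · rintro (⟨h, hP⟩ | ⟨h, hP⟩)
      · exact ⟨ne_of_lt h, hP⟩
      · exact ⟨(ne_of_lt h).symm, hP⟩
  have hdisj : Disjoint (univ.filter fun p : Fin n × Fin n => p.1 < p.2 ∧ P p)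
      (univ.filter fun p : Fin n × Fin n => p.2 < p.1 ∧ P p) := by
    rw [Finset.disjoint_left]
    intro p h1 h2
    simp only [mem_filter] at h1 h2
    exact absurd h2.2.1 (not_lt_of_gt h1.2.1)
  have hswap : (univ.filter fun p : Fin n × Fin n => p.2 < p.1 ∧ P p).card
      = (univ.filter fun p : Fin n × Fin n => p.1 < p.2 ∧ P p).card := by
    apply Finset.card_bij (fun p _ => p.swap)
    · intro p hp
      simp only [mem_filter, mem_univ, true_and, Prod.fst_swap, Prod.snd_swap] at hp ⊢
      exact ⟨hp.1, hsymm _ _ hp.2⟩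
    · intro a _ b _ h
      exact Prod.swap_injective h
    · intro p hp
      simp only [mem_filter, mem_univ, true_and, Prod.fst_swap, Prod.snd_swap] at hp ⊢
      exact ⟨p.swap, ⟨hp.1, hsymm _ _ hp.2⟩, by simp⟩
  rw [hsplit, Finset.card_union_of_disjoint hdisj, hswap, two_mul]

lemma offdiag_count' {n : ℕ} (s : Finset (Fin n))
    [inst : DecidablePred fun p : Fin n × Fin n => p.1 ≠ p.2 ∧ (p.1 ∈ s ∧ p.2 ∈ s)] :
    (univ.filter fun p : Fin n × Fin n => p.1 ≠ p.2 ∧ (p.1 ∈ s ∧ p.2 ∈ s)).card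
      = s.card * s.card - s.card := by
  rw [← Finset.offDiag_card]
  congr 1
  ext p
  simp [Finset.mem_offDiag, and_comm, and_left_comm]

/-! Backflow bound for close-to-uniform all-to-all two-qubit Pauli gates.  The qubit
pair is sampled from a distribution `p` on unordered pairs dominated pointwise by
`e^α` times the uniform distribution `u(e) = 1/C(n,2)`; the non-identity two-qubit
Pauli on the sampled pair is uniform among the `9` options. -/

/-- Sample space: a pair `i < j` of qubits and a non-identity Pauli on each. -/
abbrev GateSpG (n : ℕ) := {p : Fin n × Fin n // p.1 < p.2} × (Fin 3 × Fin 3)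

/-- Encoding of a non-identity single-qubit Pauli into `Fin 4` (`0` codes identity). -/
def pcodeG : Fin 3 → Fin 4 := Fin.succ

/-- Weight of a Pauli string. -/
def pweightG {n : ℕ} (Q : Fin n → Fin 4) : ℕ :=
  (Finset.univ.filter fun i => Q i ≠ 0).card

/-- Number of gate sites where the gate Pauli and `Q` anticommute site-wise. -/
def anticountG {n : ℕ} (Q : Fin n → Fin 4) (ω : GateSpG n) : ℕ :=
  (if Q ω.1.1.1 ≠ 0 ∧ Q ω.1.1.1 ≠ pcodeG ω.2.1 then 1 else 0) +
  (if Q ω.1.1.2 ≠ 0 ∧ Q ω.1.1.2 ≠ pcodeG ω.2.2 then 1 else 0)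

/-- The gate commutes with `Q`. -/
def CommutesG {n : ℕ} (Q : Fin n → Fin 4) (ω : GateSpG n) : Prop :=
  Even (anticountG Q ω)

/-- The gate reduces the weight of `Q` by two. -/
def DecaysG {n : ℕ} (Q : Fin n → Fin 4) (ω : GateSpG n) : Prop :=
  pcodeG ω.2.1 = Q ω.1.1.1 ∧ pcodeG ω.2.2 = Q ω.1.1.2

/-- Probability of an event when the pair is sampled from `p` and the two-site Pauli
uniformly among the `9` options. -/
noncomputable def prG (n : ℕ) (p : {e : Fin n × Fin n // e.1 < e.2} → ℝ)
    (Ev : GateSpG n → Prop) : ℝ :=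
  ∑ ω : GateSpG n, if Ev ω then p ω.1 / 9 else 0

set_option maxHeartbeats 1000000

/-- Backflow for general close-to-uniform distributions: if `p(e) ≤ e^α / C(n,2)` for
every pair `e`, then for a Pauli string of weight `w` the backflow probability satisfies
`Pr_p(Decay | Commute) ≤ e^α·C(w,2) / (9·C(n,2) − 4e^α·w(3n − 2w − 1))`, provided the
denominator is positive. -/
theorem backflow_close_to_uniform (n : ℕ) (hn : 2 ≤ n)
    (p : {e : Fin n × Fin n // e.1 < e.2} → ℝ)
    (hp0 : ∀ e, 0 ≤ p e) (hp1 : ∑ e, p e = 1)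
    (α : ℝ) (hdom : ∀ e, p e ≤ Real.exp α * (1 / n.choose 2))
    (Q : Fin n → Fin 4) (w : ℕ) (hw : pweightG Q = w)
    (hden : 0 < 9 * (n.choose 2 : ℝ) - 4 * Real.exp α * w * (3 * n - 2 * w - 1)) :
    prG n p (fun ω => DecaysG Q ω ∧ CommutesG Q ω) / prG n p (CommutesG Q) ≤
      Real.exp α * (w.choose 2 : ℝ) /
        (9 * (n.choose 2 : ℝ) - 4 * Real.exp α * w * (3 * (n : ℝ) - 2 * w - 1)) := by
  set E := Real.exp α with hEdef
  have hE : 0 < E := Real.exp_pos α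
  have hNpos : (0:ℝ) < (n.choose 2 : ℝ) := by
    exact_mod_cast Nat.choose_pos hn
  set N : ℝ := (n.choose 2 : ℝ) with hNdef
  set S : Finset (Fin n) := univ.filter (fun i => Q i ≠ 0) with hS
  have hSw : S.card = w := hw
  have hwn : w ≤ n := by
    rw [← hSw]
    simpa using Finset.card_le_univ S
  have hc9 : ∀ e : {q : Fin n × Fin n // q.1 < q.2}, (0:ℝ) ≤ p e / 9 :=
    fun e => div_nonneg (hp0 e) (by norm_num)
  have hcc : ∀ e : {q : Fin n × Fin n // q.1 < q.2}, p e / 9 ≤ E / (9 * N) := by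
    intro e
    have h1 : p e ≤ E / N := by
      have := hdom e
      rw [mul_one_div] at this
      exact this
    calc p e / 9 ≤ (E / N) / 9 := by linarith
      _ = E / (9 * N) := by ring
  have hEc : (0:ℝ) ≤ E / (9 * N) := by positivity
  have hpr : ∀ Ev : GateSpG n → Prop, prG n p Ev
      = ∑ e : {q : Fin n × Fin n // q.1 < q.2}, ∑ ab : Fin 3 × Fin 3,
          (if Ev (e, ab) then p e / 9 else 0) := by
    intro Ev; rw [prG, Fintype.sum_prod_type]
  -- numerator bound
  have hnum : prG n p (fun ω => DecaysG Q ω ∧ CommutesG Q ω)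
      ≤ ((univ.filter fun e : {q : Fin n × Fin n // q.1 < q.2} =>
          Q e.1.1 ≠ 0 ∧ Q e.1.2 ≠ 0).card : ℝ) * (E/(9*N)) := by
    rw [hpr]
    refine le_trans (Finset.sum_le_sum
      (g := fun e : {q : Fin n × Fin n // q.1 < q.2} =>
        (if Q e.1.1 ≠ 0 ∧ Q e.1.2 ≠ 0 then (1:ℝ) else 0) * (E/(9*N)))
      (fun e _ => ?_)) (le_of_eq ?_)
    · refine le_trans (Finset.sum_le_sum (fun ab _ => ?_))
        (sum9_decay (Q e.1.1) (Q e.1.2) (p e / 9) (E/(9*N)) (hc9 e) (hcc e) hEc)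
      by_cases hd : DecaysG Q (e, ab) ∧ CommutesG Q (e, ab)
      · rw [if_pos hd, if_pos (⟨hd.1.1, hd.1.2⟩ :
          Fin.succ ab.1 = Q e.1.1 ∧ Fin.succ ab.2 = Q e.1.2)]
      · rw [if_neg hd]
        split_ifs
        · exact hc9 e
        · exact le_rfl
    · rw [← Finset.sum_mul, Finset.sum_boole]
  -- normalization
  have hsum1 : prG n p (CommutesG Q) = 1 - prG n p (fun ω => ¬ CommutesG Q ω) := by
    have htot : ∑ ω : GateSpG n, p ω.1 / 9 = 1 := by
      rw [Fintype.sum_prod_type]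
      have h2 : ∀ e : {q : Fin n × Fin n // q.1 < q.2},
          (∑ _ab : Fin 3 × Fin 3, p e / 9) = p e := by
        intro e
        rw [Finset.sum_const, Finset.card_univ, nsmul_eq_mul]
        simp only [Fintype.card_prod, Fintype.card_fin]
        push_cast
        ring
      exact (Finset.sum_congr rfl fun e _ => h2 e).trans hp1
    have key : prG n p (CommutesG Q) + prG n p (fun ω => ¬ CommutesG Q ω) = 1 := by
      rw [prG, prG, ← Finset.sum_add_distrib, ← htot]
      refine Finset.sum_congr rfl fun ω _ => ?_
      by_cases h : CommutesG Q ω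
      · rw [if_pos h, if_neg (not_not_intro h), add_zero]
      · rw [if_neg h, if_pos h, zero_add]
    linarith
  -- anticommute bound
  have hanti : prG n p (fun ω => ¬ CommutesG Q ω)
      ≤ ((univ.filter fun e : {q : Fin n × Fin n // q.1 < q.2} =>
          ¬ (Q e.1.1 = 0 ∧ Q e.1.2 = 0)).card : ℝ) * (6 * (E/(9*N))) := by
    rw [hpr]
    refine le_trans (Finset.sum_le_sum
      (g := fun e : {q : Fin n × Fin n // q.1 < q.2} =>
        (if ¬ (Q e.1.1 = 0 ∧ Q e.1.2 = 0) then (6:ℝ) else 0) * (E/(9*N)))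
      (fun e _ => ?_)) (le_of_eq ?_)
    · refine le_trans (Finset.sum_le_sum (fun ab _ => ?_))
        (sum9_anti (Q e.1.1) (Q e.1.2) (p e / 9) (E/(9*N)) (hc9 e) (hcc e) hEc)
      have hiff : (¬ CommutesG Q (e, ab)) ↔
          ¬ Even ((if Q e.1.1 ≠ 0 ∧ Q e.1.1 ≠ Fin.succ ab.1 then 1 else 0) +
              (if Q e.1.2 ≠ 0 ∧ Q e.1.2 ≠ Fin.succ ab.2 then 1 else 0)) := Iff.rfl
      by_cases hd : ¬ CommutesG Q (e, ab)
      · rw [if_pos hd, if_pos (hiff.mp hd)]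
      · rw [if_neg hd, if_neg (fun h => hd (hiff.mpr h))]
    · have h3 : ∀ e : {q : Fin n × Fin n // q.1 < q.2},
          (if ¬ (Q e.1.1 = 0 ∧ Q e.1.2 = 0) then (6:ℝ) else 0) * (E/(9*N))
          = (if ¬ (Q e.1.1 = 0 ∧ Q e.1.2 = 0) then (1:ℝ) else 0) * (6*(E/(9*N))) := by
        intro e; split_ifs <;> ring
      rw [Finset.sum_congr rfl fun e _ => h3 e, ← Finset.sum_mul, Finset.sum_boole]
  -- counting
  have hDcount : 2 * (univ.filter fun e : {q : Fin n × Fin n // q.1 < q.2} =>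
      Q e.1.1 ≠ 0 ∧ Q e.1.2 ≠ 0).card = w * w - w := by
    rw [double_count (fun q : Fin n × Fin n => Q q.1 ≠ 0 ∧ Q q.2 ≠ 0)
      (fun a b h => ⟨h.2, h.1⟩)]
    have heq : (univ.filter fun q : Fin n × Fin n => q.1 ≠ q.2 ∧ (Q q.1 ≠ 0 ∧ Q q.2 ≠ 0))
        = (univ.filter fun q : Fin n × Fin n => q.1 ≠ q.2 ∧ (q.1 ∈ S ∧ q.2 ∈ S)) := by
      ext q; simp [hS]
    rw [heq, offdiag_count', hSw]
  set T : Finset (Fin n) := univ.filter (fun i => Q i = 0) with hT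
  have hTc : w + T.card = n := by
    have h := Finset.card_filter_add_card_filter_not
      (s := (univ : Finset (Fin n))) (p := fun i => Q i ≠ 0)
    simp only [not_not, Finset.card_univ, Fintype.card_fin] at h
    rw [← hSw, hS, hT]
    convert h using 3
  have hMcount : 2 * (univ.filter fun e : {q : Fin n × Fin n // q.1 < q.2} =>
      ¬ (Q e.1.1 = 0 ∧ Q e.1.2 = 0)).card + (T.card * T.card - T.card) = n * n - n := by
    rw [double_count (fun q : Fin n × Fin n => ¬ (Q q.1 = 0 ∧ Q q.2 = 0))
      (fun a b h hc => h ⟨hc.2, hc.1⟩)]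
    have hsplit := Finset.card_filter_add_card_filter_not
      (s := (univ.filter fun q : Fin n × Fin n => q.1 ≠ q.2))
      (p := fun q : Fin n × Fin n => ¬ (Q q.1 = 0 ∧ Q q.2 = 0))
    rw [Finset.filter_filter, Finset.filter_filter] at hsplit
    simp only [not_not] at hsplit
    have hTeq : (univ.filter fun q : Fin n × Fin n => q.1 ≠ q.2 ∧ (Q q.1 = 0 ∧ Q q.2 = 0))
        = (univ.filter fun q : Fin n × Fin n => q.1 ≠ q.2 ∧ (q.1 ∈ T ∧ q.2 ∈ T)) := by
      ext q; simp [hT]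
    have huniv : (univ.filter fun q : Fin n × Fin n => q.1 ≠ q.2).card = n * n - n := by
      have h := offdiag_count' (univ : Finset (Fin n))
      simp only [Finset.mem_univ, true_and, and_true, Finset.card_univ,
        Fintype.card_fin] at h
      convert h using 2
    rw [hTeq, offdiag_count'] at hsplit
    exact hsplit.trans huniv
  -- cast to reals
  have hle_sq : ∀ k : ℕ, k ≤ k * k := by
    intro k
    cases k with
    | zero => simp
    | succ m => exact Nat.le_mul_of_pos_left _ (Nat.succ_pos m)
  have hDR : ((univ.filter fun e : {q : Fin n × Fin n // q.1 < q.2} =>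
      Q e.1.1 ≠ 0 ∧ Q e.1.2 ≠ 0).card : ℝ) = ((w:ℝ) * w - w) / 2 := by
    have h2 : ((2 * (univ.filter fun e : {q : Fin n × Fin n // q.1 < q.2} =>
        Q e.1.1 ≠ 0 ∧ Q e.1.2 ≠ 0).card : ℕ) : ℝ) = ((w * w - w : ℕ):ℝ) := by
      rw [hDcount]
    rw [Nat.cast_sub (hle_sq w)] at h2
    push_cast at h2
    linarith
  have hTcr : (T.card : ℝ) = (n:ℝ) - w := by
    have h2 : ((w + T.card : ℕ):ℝ) = ((n:ℕ):ℝ) := by rw [hTc]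
    push_cast at h2
    linarith
  have hMR : 2 * ((univ.filter fun e : {q : Fin n × Fin n // q.1 < q.2} =>
      ¬ (Q e.1.1 = 0 ∧ Q e.1.2 = 0)).card : ℝ)
      = ((n:ℝ) * n - n) - (((n:ℝ)-w) * ((n:ℝ)-w) - ((n:ℝ)-w)) := by
    have h2 : ((2 * (univ.filter fun e : {q : Fin n × Fin n // q.1 < q.2} =>
        ¬ (Q e.1.1 = 0 ∧ Q e.1.2 = 0)).card + (T.card * T.card - T.card) : ℕ) : ℝ)
        = ((n * n - n : ℕ):ℝ) := by
      rw [hMcount]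
    rw [Nat.cast_add, Nat.cast_sub (hle_sq T.card), Nat.cast_sub (hle_sq n)] at h2
    push_cast at h2
    rw [hTcr] at h2
    linarith
  -- real arithmetic
  have hxw : (w:ℝ) ≤ (n:ℝ) := by exact_mod_cast hwn
  have hx2 : (2:ℝ) ≤ (n:ℝ) := by exact_mod_cast hn
  have hy0 : (0:ℝ) ≤ (w:ℝ) := Nat.cast_nonneg w
  have hW : ((w.choose 2 : ℕ):ℝ) = (w:ℝ) * ((w:ℝ)-1) / 2 := by
    rw [Nat.cast_choose_two]
  have hPD : prG n p (fun ω => DecaysG Q ω ∧ CommutesG Q ω)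
      ≤ E * (w.choose 2 : ℝ) / (9*N) := by
    refine le_trans hnum (le_of_eq ?_)
    rw [hDR, hW]
    ring
  have h6M : 6 * ((univ.filter fun e : {q : Fin n × Fin n // q.1 < q.2} =>
      ¬ (Q e.1.1 = 0 ∧ Q e.1.2 = 0)).card : ℝ) ≤ 4 * (w:ℝ) * (3*(n:ℝ) - 2*w - 1) := by
    have key : ∀ m : ℝ, 2 * m = ((n:ℝ) * n - n) - (((n:ℝ)-w) * ((n:ℝ)-w) - ((n:ℝ)-w)) →
        6 * m ≤ 4 * (w:ℝ) * (3*(n:ℝ) - 2*w - 1) := by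
      intro m hm
      nlinarith [mul_nonneg hy0 (show (0:ℝ) ≤ 6*(n:ℝ) - 5*(w:ℝ) - 1 by linarith)]
    exact key _ hMR
  have hPA : prG n p (fun ω => ¬ CommutesG Q ω)
      ≤ 4 * E * (w:ℝ) * (3*(n:ℝ) - 2*w - 1) / (9*N) := by
    refine le_trans hanti ?_
    calc ((univ.filter fun e : {q : Fin n × Fin n // q.1 < q.2} =>
          ¬ (Q e.1.1 = 0 ∧ Q e.1.2 = 0)).card : ℝ) * (6 * (E/(9*N)))
        = (6 * ((univ.filter fun e : {q : Fin n × Fin n // q.1 < q.2} =>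
          ¬ (Q e.1.1 = 0 ∧ Q e.1.2 = 0)).card : ℝ)) * (E/(9*N)) := by ring
      _ ≤ (4 * (w:ℝ) * (3*(n:ℝ) - 2*w - 1)) * (E/(9*N)) :=
          mul_le_mul_of_nonneg_right h6M hEc
      _ = 4 * E * (w:ℝ) * (3*(n:ℝ) - 2*w - 1) / (9*N) := by ring
  set d : ℝ := 9 * N - 4 * E * w * (3 * (n:ℝ) - 2 * w - 1) with hd
  have hdpos : 0 < d := by
    rw [hd]
    convert hden using 2
  have h9 : (0:ℝ) < 9*N := by positivity
  have hPC : d / (9*N) ≤ prG n p (CommutesG Q) := by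
    rw [hsum1, hd, div_le_iff₀ h9, sub_mul, one_mul]
    have hPA9 := (le_div_iff₀ h9).mp hPA
    linarith
  have hPCpos : 0 < prG n p (CommutesG Q) :=
    lt_of_lt_of_le (div_pos hdpos h9) hPC
  rw [div_le_div_iff₀ hPCpos hdpos]
  have hW0 : (0:ℝ) ≤ E * (w.choose 2 : ℝ) := by positivity
  calc prG n p (fun ω => DecaysG Q ω ∧ CommutesG Q ω) * d
      ≤ (E * (w.choose 2 : ℝ) / (9*N)) * d := mul_le_mul_of_nonneg_right hPD hdpos.le
    _ = (E * (w.choose 2 : ℝ)) * (d/(9*N)) := by ring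
    _ ≤ (E * (w.choose 2 : ℝ)) * prG n p (CommutesG Q) := mul_le_mul_of_nonneg_left hPC hW0
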